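/- Let E, A be n×n real matrices with a Weierstrass decomposition (Q, P, n₁, n₂, W, N) in which N = 0 (the impulse-free case, index ℓ = 1). Let b, d, c ∈ ℝⁿ, h > 0, let u : ℝ → ℝ and v₀ : ℝ → ℝⁿ be continuous, and let x : ℝ → ℝⁿ be differentiable with E·ẋ(t) = A·x(t) + b·u(t) + d·u(t−h) + v₀(t) for all t ≥ 0 and y(t) = cᵀx(t). Split Qb = (α₁, α₂), Qd = (β₁, β₂), Q·v₀(t) = (η₁(t), η₂(t)) and Pᵀc = (γ₁, γ₂) with first components in ℝ^{n₁}, let z(t) = P⁻¹x(t) = (z₁(t), z₂(t)) and z₁₀ = z₁(0). Then for all t ≥ 0: y(t) = γ₁ᵀ·exp(tW)·(z₁₀ + ∫₀ᵗ exp(−τW)·(α₁·u(τ) + β₁·u(τ−h) + η₁(τ)) dτ) − γ₂ᵀ·(α₂·u(t) + β₂·u(t−h) + η₂(t)). -/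

import Mathlib

open Matrix intervalIntegral

/-- The canonical identification of `Fin n` with `Fin n₁ ⊕ Fin n₂` when `n₁ + n₂ = n`. -/
def blockEquiv {n₁ n₂ n : ℕ} (h : n₁ + n₂ = n) : Fin n ≃ (Fin n₁ ⊕ Fin n₂) :=
  (finCongr h.symm).trans finSumFinEquiv.symm

/-- First (slow) component of a vector in `ℝⁿ` under the block identification. -/
def part1 {n₁ n₂ n : ℕ} (h : n₁ + n₂ = n) (v : Fin n → ℝ) : Fin n₁ → ℝ :=
  fun i => v ((blockEquiv h).symm (Sum.inl i))

/-- Second (fast) component of a vector in `ℝⁿ` under the block identification. -/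
def part2 {n₁ n₂ n : ℕ} (h : n₁ + n₂ = n) (v : Fin n → ℝ) : Fin n₂ → ℝ :=
  fun i => v ((blockEquiv h).symm (Sum.inr i))

attribute [local instance] Matrix.linftyOpNormedRing Matrix.linftyOpNormedAlgebra

noncomputable def mulVecCLM (m : ℕ) :
    Matrix (Fin m) (Fin m) ℝ →L[ℝ] ((Fin m → ℝ) →L[ℝ] (Fin m → ℝ)) :=
  LinearMap.toContinuousLinearMap
    { toFun := fun M => LinearMap.toContinuousLinearMap M.mulVecLin
      map_add' := by intro M N; ext v i; simp [Matrix.add_mulVec]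
      map_smul' := by intro r M; ext v i; simp [Matrix.smul_mulVec] }

@[simp] lemma mulVecCLM_apply {m : ℕ} (M : Matrix (Fin m) (Fin m) ℝ) (v : Fin m → ℝ) :
    mulVecCLM m M v = M.mulVec v := rfl

/-- `part1` as a continuous linear map. -/
noncomputable def part1CLM {n₁ n₂ n : ℕ} (h : n₁ + n₂ = n) : (Fin n → ℝ) →L[ℝ] (Fin n₁ → ℝ) :=
  ContinuousLinearMap.pi fun i => ContinuousLinearMap.proj ((blockEquiv h).symm (Sum.inl i))

@[simp] lemma part1CLM_apply {n₁ n₂ n : ℕ} (h : n₁ + n₂ = n) (v : Fin n → ℝ) :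
    part1CLM h v = part1 h v := rfl

/-- `part2` as a continuous linear map. -/
noncomputable def part2CLM {n₁ n₂ n : ℕ} (h : n₁ + n₂ = n) : (Fin n → ℝ) →L[ℝ] (Fin n₂ → ℝ) :=
  ContinuousLinearMap.pi fun i => ContinuousLinearMap.proj ((blockEquiv h).symm (Sum.inr i))

@[simp] lemma part2CLM_apply {n₁ n₂ n : ℕ} (h : n₁ + n₂ = n) (v : Fin n → ℝ) :
    part2CLM h v = part2 h v := rfl

lemma dot_split {n₁ n₂ n : ℕ} (hn : n₁ + n₂ = n) (a v : Fin n → ℝ) :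
    a ⬝ᵥ v = part1 hn a ⬝ᵥ part1 hn v + part2 hn a ⬝ᵥ part2 hn v := by
  simp only [dotProduct, part1, part2]
  rw [← Equiv.sum_comp (blockEquiv hn).symm (fun j => a j * v j), Fintype.sum_sum_type]

/-- Variation of constants for a linear ODE with continuous inhomogeneity. -/
lemma voc {m : ℕ} (W : Matrix (Fin m) (Fin m) ℝ) (z f : ℝ → Fin m → ℝ)
    (hf : Continuous f)
    (hz : ∀ t, HasDerivAt z (W.mulVec (z t) + f t) t) (t : ℝ) :
    z t = (NormedSpace.exp (t • W)).mulVec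
      (z 0 + ∫ τ in (0:ℝ)..t, (NormedSpace.exp (-(τ • W))).mulVec (f τ)) := by
  have hexpc : Continuous fun τ : ℝ => NormedSpace.exp (τ • (-W)) :=
    NormedSpace.exp_continuous.comp (continuous_id.smul continuous_const)
  have hg : ∀ s : ℝ, HasDerivAt (fun τ => (NormedSpace.exp (τ • (-W))).mulVec (z τ))
      ((NormedSpace.exp (s • (-W))).mulVec (f s)) s := by
    intro s
    have h1 : HasDerivAt (fun τ : ℝ => (mulVecCLM m) (NormedSpace.exp (τ • (-W))))
        ((mulVecCLM m) (NormedSpace.exp (s • (-W)) * (-W))) s :=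
      ((mulVecCLM m).hasFDerivAt.comp_hasDerivAt s (hasDerivAt_exp_smul_const (-W) s))
    have h2 := h1.clm_apply (hz s)
    have key : ((mulVecCLM m) (NormedSpace.exp (s • -W) * -W)) (z s)
        + ((mulVecCLM m) (NormedSpace.exp (s • -W))) (W.mulVec (z s) + f s)
        = (NormedSpace.exp (s • (-W))).mulVec (f s) := by
      simp only [mulVecCLM_apply, Matrix.mulVec_add, ← Matrix.mulVec_mulVec,
        Matrix.neg_mulVec, Matrix.mulVec_neg]
      exact neg_add_cancel_left _ _
    exact key ▸ h2
  have hcont : Continuous fun τ : ℝ => (NormedSpace.exp (τ • (-W))).mulVec (f τ) := by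
    have : Continuous fun τ : ℝ => ((mulVecCLM m) (NormedSpace.exp (τ • (-W)))) (f τ) :=
      ((mulVecCLM m).continuous.comp hexpc).clm_apply hf
    simpa using this
  have hftc : (∫ τ in (0:ℝ)..t, (NormedSpace.exp (τ • (-W))).mulVec (f τ))
      = (NormedSpace.exp (t • (-W))).mulVec (z t)
        - (NormedSpace.exp ((0:ℝ) • (-W))).mulVec (z 0) :=
    intervalIntegral.integral_eq_sub_of_hasDerivAt (fun s _ => hg s)
      (hcont.intervalIntegrable _ _)
  have hinv : NormedSpace.exp (t • W) * NormedSpace.exp (t • (-W)) = 1 := by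
    refine (NormedSpace.exp_add_of_commute ?_).symm.trans ?_
    rotate_left
    · simp [smul_neg]
    · exact ((Commute.refl W).neg_right.smul_left t).smul_right t
  have heq : (NormedSpace.exp (t • (-W))).mulVec (z t)
      = z 0 + ∫ τ in (0:ℝ)..t, (NormedSpace.exp (-(τ • W))).mulVec (f τ) := by
    have : ∀ τ : ℝ, -(τ • W) = τ • (-W) := fun τ => by rw [smul_neg]
    simp_rw [this]
    rw [hftc]
    simp [Matrix.one_mulVec]
  calc z t = ((NormedSpace.exp (t • W)) * (NormedSpace.exp (t • (-W)))).mulVec (z t) := by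
        rw [hinv, Matrix.one_mulVec]
    _ = (NormedSpace.exp (t • W)).mulVec ((NormedSpace.exp (t • (-W))).mulVec (z t)) := by
        rw [Matrix.mulVec_mulVec]
    _ = _ := by rw [heq]

/-- Explicit output-trajectory formula of Theorem 2 in the impulse-free case `ℓ = 1`
(equations (13.a)–(13.b)): the fast equation is purely algebraic. -/
theorem output_trajectory_impulse_free
    (n n₁ n₂ : ℕ) (hn : n₁ + n₂ = n)
    (E A Q P : Matrix (Fin n) (Fin n) ℝ)
    (W : Matrix (Fin n₁) (Fin n₁) ℝ)
    (hQ : IsUnit Q) (hP : IsUnit P)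
    (hE : Matrix.reindex (blockEquiv hn) (blockEquiv hn) (Q * E * P)
        = Matrix.fromBlocks 1 0 0 (0 : Matrix (Fin n₂) (Fin n₂) ℝ))
    (hA : Matrix.reindex (blockEquiv hn) (blockEquiv hn) (Q * A * P)
        = Matrix.fromBlocks W 0 0 1)
    (b d c : Fin n → ℝ) (h : ℝ) (hh : 0 < h)
    (u : ℝ → ℝ) (v₀ : ℝ → Fin n → ℝ) (hu : Continuous u) (hv₀ : Continuous v₀)
    (x : ℝ → Fin n → ℝ) (y : ℝ → ℝ)
    (hx : Differentiable ℝ x)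
    (hsys : ∀ t : ℝ, E.mulVec (deriv x t)
        = A.mulVec (x t) + u t • b + u (t - h) • d + v₀ t)
    (hy : ∀ t : ℝ, y t = c ⬝ᵥ x t)
    (z₁ : ℝ → Fin n₁ → ℝ) (z₂ : ℝ → Fin n₂ → ℝ)
    (hz₁ : ∀ t, z₁ t = part1 hn (P⁻¹.mulVec (x t)))
    (hz₂ : ∀ t, z₂ t = part2 hn (P⁻¹.mulVec (x t)))
    (z₁₀ : Fin n₁ → ℝ) (hz₁₀ : z₁₀ = z₁ 0)
    (α₁ : Fin n₁ → ℝ) (α₂ : Fin n₂ → ℝ)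
    (hα₁ : α₁ = part1 hn (Q.mulVec b)) (hα₂ : α₂ = part2 hn (Q.mulVec b))
    (β₁ : Fin n₁ → ℝ) (β₂ : Fin n₂ → ℝ)
    (hβ₁ : β₁ = part1 hn (Q.mulVec d)) (hβ₂ : β₂ = part2 hn (Q.mulVec d))
    (η₁ : ℝ → Fin n₁ → ℝ) (η₂ : ℝ → Fin n₂ → ℝ)
    (hη₁ : ∀ t, η₁ t = part1 hn (Q.mulVec (v₀ t)))
    (hη₂ : ∀ t, η₂ t = part2 hn (Q.mulVec (v₀ t)))
    (γ₁ : Fin n₁ → ℝ) (γ₂ : Fin n₂ → ℝ)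
    (hγ₁ : γ₁ = part1 hn (Pᵀ.mulVec c)) (hγ₂ : γ₂ = part2 hn (Pᵀ.mulVec c)) :
    ∀ t : ℝ, 0 ≤ t →
      y t = γ₁ ⬝ᵥ (NormedSpace.exp (t • W)).mulVec
              (z₁₀ + ∫ τ in (0:ℝ)..t, (NormedSpace.exp (-(τ • W))).mulVec
                (u τ • α₁ + u (τ - h) • β₁ + η₁ τ))
            - γ₂ ⬝ᵥ (u t • α₂ + u (t - h) • β₂ + η₂ t) := by
  intro t ht
  set e := blockEquiv hn with he
  have hPdet : IsUnit P.det := (Matrix.isUnit_iff_isUnit_det P).mp hP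
  have hPPinv : P * P⁻¹ = 1 := Matrix.mul_nonsing_inv P hPdet
  set z : ℝ → Fin n → ℝ := fun s => P⁻¹.mulVec (x s) with hzdef
  have hx_eq : ∀ s, x s = P.mulVec (z s) := by
    intro s
    rw [hzdef]
    simp only [Matrix.mulVec_mulVec, hPPinv, Matrix.one_mulVec]
  -- the full input
  set w : ℝ → Fin n → ℝ := fun s => u s • b + u (s - h) • d + v₀ s with hwdef
  -- the master equation in reduced coordinates
  have step : ∀ s : ℝ, (Q * E * P).mulVec (P⁻¹.mulVec (deriv x s))
      = (Q * A * P).mulVec (z s) + Q.mulVec (w s) := by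
    intro s
    have h1 : (Q * E * P).mulVec (P⁻¹.mulVec (deriv x s)) = (Q * E).mulVec (deriv x s) := by
      rw [Matrix.mulVec_mulVec, mul_assoc (Q * E) P P⁻¹, hPPinv, mul_one]
    rw [h1, ← Matrix.mulVec_mulVec, hsys s]
    have h2 : A.mulVec (x s) + u s • b + u (s - h) • d + v₀ s
        = A.mulVec (x s) + w s := by rw [hwdef]; abel
    rw [h2, Matrix.mulVec_add, ← Matrix.mulVec_mulVec]
    congr 1
    rw [hx_eq s, Matrix.mulVec_mulVec, Matrix.mulVec_mulVec, mul_assoc]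
  -- transport along the block equivalence
  have block : ∀ s : ℝ,
      (Matrix.fromBlocks (1 : Matrix (Fin n₁) (Fin n₁) ℝ) 0 0
        (0 : Matrix (Fin n₂) (Fin n₂) ℝ)).mulVec ((P⁻¹.mulVec (deriv x s)) ∘ e.symm)
      = (Matrix.fromBlocks W 0 0 (1 : Matrix (Fin n₂) (Fin n₂) ℝ)).mulVec ((z s) ∘ e.symm)
        + (Q.mulVec (w s)) ∘ e.symm := by
    intro s
    rw [← hE, ← hA, Matrix.reindex_apply, Matrix.reindex_apply,
      Matrix.submatrix_mulVec_equiv, Matrix.submatrix_mulVec_equiv]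
    have hcomp : ∀ g : Fin n → ℝ, (g ∘ e.symm) ∘ (e.symm).symm = g := by
      intro g; funext j; simp
    rw [hcomp, hcomp]
    funext p
    simp only [Function.comp_apply, Pi.add_apply]
    rw [step s]
    simp
  -- slow equation
  have eq1 : ∀ s : ℝ, part1 hn (P⁻¹.mulVec (deriv x s))
      = W.mulVec (z₁ s) + (u s • α₁ + u (s - h) • β₁ + η₁ s) := by
    intro s
    funext i
    have hb := congrFun (block s) (Sum.inl i)
    simp only [Matrix.fromBlocks_mulVec, Sum.elim_inl, Matrix.one_mulVec, Matrix.zero_mulVec,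
      add_zero, zero_add, Pi.add_apply] at hb
    have hwQ : Q.mulVec (w s) = u s • Q.mulVec b + u (s - h) • Q.mulVec d + Q.mulVec (v₀ s) := by
      rw [hwdef]
      simp [Matrix.mulVec_add, Matrix.mulVec_smul]
    rw [hwQ] at hb
    simp [part1, part2, hz₁, hα₁, hβ₁, hη₁ s, hzdef, he, Function.comp_def] at hb ⊢; exact hb
  -- fast (purely algebraic) equation
  have eq2 : ∀ s : ℝ, z₂ s = -(u s • α₂ + u (s - h) • β₂ + η₂ s) := by
    intro s
    funext i
    have hb := congrFun (block s) (Sum.inr i)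
    simp only [Matrix.fromBlocks_mulVec, Sum.elim_inr, Matrix.one_mulVec, Matrix.zero_mulVec,
      add_zero, zero_add, Pi.add_apply] at hb
    have hwQ : Q.mulVec (w s) = u s • Q.mulVec b + u (s - h) • Q.mulVec d + Q.mulVec (v₀ s) := by
      rw [hwdef]
      simp [Matrix.mulVec_add, Matrix.mulVec_smul]
    rw [hwQ] at hb
    have : (0 : ℝ) = z₂ s i + (u s • α₂ + u (s - h) • β₂ + η₂ s) i := by
      simpa [part1, part2, hz₂, hα₂, hβ₂, hη₂ s, hzdef] using hb
    have := this.symm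
    simp only [Pi.neg_apply]
    linarith
  -- z₁ satisfies the slow ODE
  have hzdiff : ∀ s : ℝ, HasDerivAt z (P⁻¹.mulVec (deriv x s)) s := by
    intro s
    have := (mulVecCLM n P⁻¹).hasFDerivAt.comp_hasDerivAt s (hx s).hasDerivAt
    simpa [hzdef, Function.comp_def] using this
  have hz₁ode : ∀ s : ℝ, HasDerivAt z₁
      (W.mulVec (z₁ s) + (u s • α₁ + u (s - h) • β₁ + η₁ s)) s := by
    intro s
    have h1 := (part1CLM hn).hasFDerivAt.comp_hasDerivAt s (hzdiff s)
    have h2 : (⇑(part1CLM hn) ∘ z) = z₁ := by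
      funext τ
      show part1CLM hn (z τ) = z₁ τ
      rw [part1CLM_apply, hz₁ τ, hzdef]
    rw [h2, part1CLM_apply, eq1 s] at h1
    exact h1
  -- continuity of the inhomogeneity
  have hf₁ : Continuous fun s : ℝ => u s • α₁ + u (s - h) • β₁ + η₁ s := by
    have huh : Continuous fun s : ℝ => u (s - h) := hu.comp (continuous_id.sub continuous_const)
    have hηc : Continuous η₁ := by
      have : Continuous fun s : ℝ => part1CLM hn ((mulVecCLM n Q) (v₀ s)) :=
        (part1CLM hn).continuous.comp ((mulVecCLM n Q).continuous.comp hv₀)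
      have hfun : (fun s : ℝ => part1CLM hn ((mulVecCLM n Q) (v₀ s))) = η₁ := by
        funext s; rw [mulVecCLM_apply, part1CLM_apply, ← hη₁ s]
      rwa [hfun] at this
    exact ((hu.smul continuous_const).add (huh.smul continuous_const)).add hηc
  -- variation of constants
  have hz₁t := voc W z₁ (fun s => u s • α₁ + u (s - h) • β₁ + η₁ s) hf₁ hz₁ode t
  rw [hz₁₀]
  -- output formula
  have hyt : y t = γ₁ ⬝ᵥ z₁ t + γ₂ ⬝ᵥ z₂ t := by
    rw [hy t, hx_eq t, Matrix.dotProduct_mulVec, ← Matrix.mulVec_transpose,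
      dot_split hn, hγ₁, hγ₂, hz₁ t, hz₂ t, hzdef]
  rw [hyt, hz₁t, eq2 t, dotProduct_neg]
  ring
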